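/- Suppose (−1,−1) ∈ S, so that δ = 1 and c(0;z) = c̃(0;z) = z. Then for every complex x₀, y₀, z with |x₀| ≤ 1, |y₀| ≤ 1, 0 < |z| < 1/k and K(x₀,y₀;z) = 0, one has Q(0,0;z) = x₀y₀/z − (c(x₀;z)·Q(x₀,0;z) − z·Q(0,0;z))/z − (c̃(y₀;z)·Q(0,y₀;z) − z·Q(0,0;z))/z. -/

import Mathlib

/-- Number of walks of length `n` in the quarter plane, starting at `(0,0)`,
ending at `(i,j)`, with steps in `S`. -/
def walkCount (S : Finset (ℤ × ℤ)) (i j : ℤ) (n : ℕ) : ℕ :=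
  Finset.card (Finset.univ.filter (fun s : Fin n → {p : ℤ × ℤ // p ∈ S} =>
    (∀ l : Fin n,
        0 ≤ (∑ m ∈ Finset.univ.filter (fun m => m ≤ l), ((s m : ℤ × ℤ)).1) ∧
        0 ≤ (∑ m ∈ Finset.univ.filter (fun m => m ≤ l), ((s m : ℤ × ℤ)).2)) ∧
    (∑ m : Fin n, (s m : ℤ × ℤ)) = (i, j)))

/-- The trivariate generating function `Q(x,y;z)` of the walks. -/
noncomputable def genF (S : Finset (ℤ × ℤ)) (x y z : ℂ) : ℂ :=
  ∑' p : ℕ × ℕ × ℕ,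
    (walkCount S (p.1 : ℤ) (p.2.1 : ℤ) p.2.2 : ℂ) * x ^ p.1 * y ^ p.2.1 * z ^ p.2.2

/-- The kernel `K(x,y;z) = z·Σ_{(i,j)∈S} x^{i+1} y^{j+1} − x y`. -/
noncomputable def kernel (S : Finset (ℤ × ℤ)) (x y z : ℂ) : ℂ :=
  z * ∑ p ∈ S, x ^ (p.1 + 1) * y ^ (p.2 + 1) - x * y

/-- `c(x;z) = z·Σ_{(i,−1)∈S} x^{i+1}`. -/
noncomputable def cpoly (S : Finset (ℤ × ℤ)) (x z : ℂ) : ℂ :=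
  z * ∑ p ∈ S.filter (fun p => p.2 = -1), x ^ (p.1 + 1)

/-- `c̃(y;z) = z·Σ_{(−1,j)∈S} y^{j+1}`. -/
noncomputable def ctpoly (S : Finset (ℤ × ℤ)) (y z : ℂ) : ℂ :=
  z * ∑ p ∈ S.filter (fun p => p.1 = -1), y ^ (p.2 + 1)

/-- `δ = 1` if `(−1,−1) ∈ S`, `0` otherwise. -/
def delta (S : Finset (ℤ × ℤ)) : ℂ :=
  if ((-1, -1) : ℤ × ℤ) ∈ S then 1 else 0

open Finset

lemma filter_le_castSucc_sum {n : ℕ} {M : Type*} [AddCommMonoid M] (s : Fin (n+1) → M) (l : Fin n) :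
    ∑ m ∈ univ.filter (fun m => m ≤ l.castSucc), s m
      = ∑ m ∈ univ.filter (fun m => m ≤ l), s m.castSucc := by
  rw [Finset.sum_filter, Finset.sum_filter, Fin.sum_univ_castSucc]
  have hlast : ¬ (Fin.last n ≤ l.castSucc) := by
    simp [Fin.le_def, Fin.lt_def]
  rw [if_neg hlast, add_zero]
  simp [Fin.castSucc_le_castSucc_iff]

lemma filter_le_last_eq {n : ℕ} :
    (univ.filter (fun m : Fin (n+1) => m ≤ Fin.last n)) = univ := by
  ext m; simp [Fin.le_last]

lemma walkCount_succ (S : Finset (ℤ × ℤ)) (i j : ℤ) (hi : 0 ≤ i) (hj : 0 ≤ j) (n : ℕ) :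
    walkCount S i j (n+1) = ∑ p ∈ S, walkCount S (i - p.1) (j - p.2) n := by
  classical
  rw [← Finset.sum_attach S (fun p => walkCount S (i - p.1) (j - p.2) n)]
  unfold walkCount
  rw [← Finset.card_sigma]
  apply Finset.card_nbij' (fun s => ⟨s (Fin.last n), Fin.init s⟩)
      (fun q => Fin.snoc q.2 q.1)
  · -- forward membership
    intro s hs
    simp only [Finset.mem_coe, Finset.mem_filter, Finset.mem_univ, true_and] at hs
    obtain ⟨hpart, htot⟩ := hs
    simp only [Finset.mem_coe, Finset.mem_sigma, Finset.mem_attach, true_and, Finset.mem_filter,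
      Finset.mem_univ]
    have hsum : (∑ m : Fin n, (Fin.init s m : ℤ × ℤ)) + (s (Fin.last n) : ℤ × ℤ) = (i, j) := by
      rw [← htot, Fin.sum_univ_castSucc]
      rfl
    refine ⟨?_, ?_⟩
    · intro l
      have h1 := filter_le_castSucc_sum (fun m => ((s m : ℤ × ℤ)).1) l
      have h2 := filter_le_castSucc_sum (fun m => ((s m : ℤ × ℤ)).2) l
      constructor
      · rw [show (fun m : Fin n => ((Fin.init s m : ℤ × ℤ)).1) = fun m => ((s m.castSucc : ℤ × ℤ)).1 from rfl, ← h1]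
        exact (hpart l.castSucc).1
      · rw [show (fun m : Fin n => ((Fin.init s m : ℤ × ℤ)).2) = fun m => ((s m.castSucc : ℤ × ℤ)).2 from rfl, ← h2]
        exact (hpart l.castSucc).2
    · have h3 : (∑ m : Fin n, (Fin.init s m : ℤ × ℤ)) = (i, j) - (s (Fin.last n) : ℤ × ℤ) :=
        eq_sub_of_add_eq hsum
      rw [h3, Prod.ext_iff]
      simp
  · -- backward membership
    rintro ⟨p, t⟩ hq
    simp only [Finset.mem_coe, Finset.mem_sigma, Finset.mem_attach, true_and, Finset.mem_filter,
      Finset.mem_univ] at hq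
    obtain ⟨hpart, htot⟩ := hq
    simp only [Finset.mem_coe, Finset.mem_filter, Finset.mem_univ, true_and]
    have hsum : (∑ m : Fin (n+1), ((Fin.snoc t p : Fin (n+1) → {p : ℤ × ℤ // p ∈ S}) m : ℤ × ℤ)) = (i, j) := by
      rw [Fin.sum_univ_castSucc]
      simp only [Fin.snoc_castSucc, Fin.snoc_last]
      rw [htot, Prod.ext_iff]
      simp
    refine ⟨?_, hsum⟩
    intro l
    induction l using Fin.lastCases with
    | last =>
      rw [filter_le_last_eq]
      have h1 : (∑ m : Fin (n+1), (((Fin.snoc t p : Fin (n+1) → {p : ℤ × ℤ // p ∈ S}) m : ℤ × ℤ)).1) = i := by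
        have := congrArg Prod.fst hsum
        rwa [Prod.fst_sum] at this
      have h2 : (∑ m : Fin (n+1), (((Fin.snoc t p : Fin (n+1) → {p : ℤ × ℤ // p ∈ S}) m : ℤ × ℤ)).2) = j := by
        have := congrArg Prod.snd hsum
        rwa [Prod.snd_sum] at this
      exact ⟨h1 ▸ hi, h2 ▸ hj⟩
    | cast l =>
      have h1 := filter_le_castSucc_sum (fun m => (((Fin.snoc t p : Fin (n+1) → {p : ℤ × ℤ // p ∈ S}) m : ℤ × ℤ)).1) l
      have h2 := filter_le_castSucc_sum (fun m => (((Fin.snoc t p : Fin (n+1) → {p : ℤ × ℤ // p ∈ S}) m : ℤ × ℤ)).2) l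
      rw [h1, h2]
      simp only [Fin.snoc_castSucc]
      exact hpart l
  · -- left inverse
    intro s _
    exact Fin.snoc_init_self s
  · -- right inverse
    rintro ⟨p, t⟩ _
    simp [Fin.snoc_last, Fin.init_snoc]

lemma walkCount_eq_zero_of_neg (S : Finset (ℤ × ℤ)) (i j : ℤ) (n : ℕ)
    (h : i < 0 ∨ j < 0) : walkCount S i j n = 0 := by
  classical
  unfold walkCount
  rw [Finset.card_eq_zero, Finset.filter_eq_empty_iff]
  rintro s - ⟨hpart, htot⟩
  have h1 : (∑ m : Fin n, ((s m : ℤ × ℤ)).1) = i := by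
    have := congrArg Prod.fst htot; rwa [Prod.fst_sum] at this
  have h2 : (∑ m : Fin n, ((s m : ℤ × ℤ)).2) = j := by
    have := congrArg Prod.snd htot; rwa [Prod.snd_sum] at this
  cases n with
  | zero =>
    simp only [Finset.univ_eq_empty, Finset.sum_empty] at h1 h2
    omega
  | succ m =>
    have := hpart (Fin.last m)
    rw [filter_le_last_eq] at this
    rw [h1, h2] at this
    omega

lemma walkCount_le (S : Finset (ℤ × ℤ)) (i j : ℤ) (n : ℕ) :
    walkCount S i j n ≤ S.card ^ n := by
  classical
  unfold walkCount
  calc _ ≤ (Finset.univ : Finset (Fin n → {p : ℤ × ℤ // p ∈ S})).card :=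
        Finset.card_filter_le _ _
    _ = S.card ^ n := by
        rw [Finset.card_univ, Fintype.card_fun, Fintype.card_coe, Fintype.card_fin]

lemma step_bound {S : Finset (ℤ × ℤ)}
    (hS : S ⊆ ({-1, 0, 1} ×ˢ {-1, 0, 1} : Finset (ℤ × ℤ)) \ {((0 : ℤ), (0 : ℤ))}) :
    ∀ p ∈ S, (p.1 = -1 ∨ p.1 = 0 ∨ p.1 = 1) ∧ (p.2 = -1 ∨ p.2 = 0 ∨ p.2 = 1) := by
  intro p hp
  have := hS hp
  rw [Finset.mem_sdiff, Finset.mem_product] at this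
  obtain ⟨⟨h1, h2⟩, -⟩ := this
  simp only [Finset.mem_insert, Finset.mem_singleton] at h1 h2
  exact ⟨h1, h2⟩

lemma walkCount_eq_zero_of_gt {S : Finset (ℤ × ℤ)}
    (hS : S ⊆ ({-1, 0, 1} ×ˢ {-1, 0, 1} : Finset (ℤ × ℤ)) \ {((0 : ℤ), (0 : ℤ))})
    (i j : ℤ) (n : ℕ) (h : (n : ℤ) < i ∨ (n : ℤ) < j) : walkCount S i j n = 0 := by
  classical
  unfold walkCount
  rw [Finset.card_eq_zero, Finset.filter_eq_empty_iff]
  rintro s - ⟨hpart, htot⟩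
  have h1 : (∑ m : Fin n, ((s m : ℤ × ℤ)).1) = i := by
    have := congrArg Prod.fst htot; rwa [Prod.fst_sum] at this
  have h2 : (∑ m : Fin n, ((s m : ℤ × ℤ)).2) = j := by
    have := congrArg Prod.snd htot; rwa [Prod.snd_sum] at this
  have b1 : (∑ m : Fin n, ((s m : ℤ × ℤ)).1) ≤ (n : ℤ) := by
    calc _ ≤ ∑ _m : Fin n, (1 : ℤ) := by
          apply Finset.sum_le_sum
          intro m _
          have := (step_bound hS _ (s m).2).1
          omega
      _ = (n : ℤ) := by simp
  have b2 : (∑ m : Fin n, ((s m : ℤ × ℤ)).2) ≤ (n : ℤ) := by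
    calc _ ≤ ∑ _m : Fin n, (1 : ℤ) := by
          apply Finset.sum_le_sum
          intro m _
          have := (step_bound hS _ (s m).2).2
          omega
      _ = (n : ℤ) := by simp
  omega

lemma walkCount_zero_zero (S : Finset (ℤ × ℤ)) : walkCount S 0 0 0 = 1 := by
  classical
  unfold walkCount
  rw [Finset.card_eq_one]
  refine ⟨fun m => m.elim0, ?_⟩
  ext s
  simp only [Finset.mem_filter, Finset.mem_univ, true_and, Finset.mem_singleton]
  constructor
  · intro _; funext m; exact m.elim0
  · rintro rfl
    refine ⟨fun l => l.elim0, by simp; rfl⟩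

lemma shift1 (n : ℕ) (f : ℤ → ℂ) (hneg : ∀ m : ℤ, m < 0 → f m = 0)
    (htop : ∀ m : ℤ, (n : ℤ) < m → f m = 0) (a : ℤ)
    (ha : a = -1 ∨ a = 0 ∨ a = 1) (x : ℂ) :
    ∑ i ∈ Finset.range (n+2), f ((i : ℤ) - a) * x ^ (i+1)
      = x ^ ((a+1 : ℤ)) * (∑ i ∈ Finset.range (n+1), f (i : ℤ) * x ^ i)
        - (if a = -1 then f 0 else 0) := by
  rcases ha with rfl | rfl | rfl
  · -- a = -1
    norm_num
    have key : ∀ i : ℕ, f ((i : ℤ) + 1) * x ^ (i+1) = f ((i+1 : ℕ) : ℤ) * x ^ (i+1) := by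
      intro i; push_cast; ring_nf
    calc ∑ i ∈ Finset.range (n+2), f ((i : ℤ) - (-1)) * x ^ (i+1)
        = ∑ i ∈ Finset.range (n+2), f (((i+1 : ℕ) : ℤ)) * x ^ (i+1) := by
          apply Finset.sum_congr rfl; intro i _
          push_cast; ring_nf
      _ = (∑ i ∈ Finset.range (n+3), f (i : ℤ) * x ^ i) - f 0 := by
          rw [Finset.sum_range_succ' (fun i => f (i : ℤ) * x ^ i) (n+2)]
          simp
      _ = (∑ i ∈ Finset.range (n+1), f (i : ℤ) * x ^ i) - f 0 := by
          rw [Finset.sum_range_succ, Finset.sum_range_succ]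
          rw [htop ((n+1 : ℕ) : ℤ) (by push_cast; omega),
            htop ((n+2 : ℕ) : ℤ) (by push_cast; omega)]
          ring
      _ = _ := by norm_num
  · -- a = 0
    norm_num
    rw [Finset.sum_range_succ, htop ((n+1 : ℕ) : ℤ) (by push_cast; omega)]
    rw [Finset.mul_sum]
    simp only [zero_mul, add_zero]
    apply Finset.sum_congr rfl; intro i _
    ring
  · -- a = 1
    rw [show ((1:ℤ)+1) = ((2:ℕ):ℤ) by norm_num, zpow_natCast, if_neg (by norm_num), sub_zero]
    rw [Finset.sum_range_succ' (fun i => f ((i : ℤ) - 1) * x ^ (i+1)) (n+1)]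
    norm_num [hneg (-1) (by omega)]
    rw [Finset.mul_sum]
    apply Finset.sum_congr rfl; intro i _
    ring

noncomputable def polyA (S : Finset (ℤ × ℤ)) (x y : ℂ) (n : ℕ) : ℂ :=
  ∑ j ∈ Finset.range (n+1), (∑ i ∈ Finset.range (n+1), (walkCount S i j n : ℂ) * x ^ i) * y ^ j

noncomputable def polyB (S : Finset (ℤ × ℤ)) (x : ℂ) (n : ℕ) : ℂ :=
  ∑ i ∈ Finset.range (n+1), (walkCount S i 0 n : ℂ) * x ^ i

noncomputable def polyR (S : Finset (ℤ × ℤ)) (y : ℂ) (n : ℕ) : ℂ :=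
  ∑ j ∈ Finset.range (n+1), (walkCount S 0 j n : ℂ) * y ^ j

lemma step_identity {S : Finset (ℤ × ℤ)}
    (hS : S ⊆ ({-1, 0, 1} ×ˢ {-1, 0, 1} : Finset (ℤ × ℤ)) \ {((0 : ℤ), (0 : ℤ))})
    (x y : ℂ) (n : ℕ) :
    x * y * polyA S x y (n+1)
      = (∑ p ∈ S, x ^ (p.1 + 1) * y ^ (p.2 + 1)) * polyA S x y n
        - (∑ p ∈ S.filter (fun p => p.2 = -1), x ^ (p.1+1)) * polyB S x n
        - (∑ p ∈ S.filter (fun p => p.1 = -1), y ^ (p.2+1)) * polyR S y n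
        + (if ((-1,-1) : ℤ × ℤ) ∈ S then (walkCount S 0 0 n : ℂ) else 0) := by
  classical
  set G : ℤ → ℂ := fun m => ∑ i ∈ Finset.range (n+1), (walkCount S i m n : ℂ) * x ^ i with hG
  set H : ℤ → ℂ := fun m => (walkCount S 0 m n : ℂ) with hH
  have hGneg : ∀ m : ℤ, m < 0 → G m = 0 := by
    intro m hm
    simp only [hG]
    apply Finset.sum_eq_zero
    intro i _
    rw [walkCount_eq_zero_of_neg S _ _ _ (Or.inr hm)]
    simp
  have hGtop : ∀ m : ℤ, (n : ℤ) < m → G m = 0 := by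
    intro m hm
    apply Finset.sum_eq_zero
    intro i _
    rw [walkCount_eq_zero_of_gt hS _ _ _ (Or.inr hm)]
    simp
  have hHneg : ∀ m : ℤ, m < 0 → H m = 0 := by
    intro m hm
    simp only [hH]
    rw [walkCount_eq_zero_of_neg S _ _ _ (Or.inr hm), Nat.cast_zero]
  have hHtop : ∀ m : ℤ, (n : ℤ) < m → H m = 0 := by
    intro m hm
    simp only [hH]
    rw [walkCount_eq_zero_of_gt hS _ _ _ (Or.inr hm), Nat.cast_zero]
  -- Step 1+2: expand the LHS
  have e1 : x * y * polyA S x y (n+1)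
      = ∑ p ∈ S, ∑ j ∈ Finset.range (n+2),
          (∑ i ∈ Finset.range (n+2),
            (walkCount S ((i : ℤ) - p.1) ((j : ℤ) - p.2) n : ℂ) * x ^ (i+1)) * y ^ (j+1) := by
    unfold polyA
    rw [Finset.mul_sum, Finset.sum_comm]
    apply Finset.sum_congr rfl
    intro j _
    have hq : ∀ i ∈ Finset.range (n+2), (walkCount S i j (n+1) : ℂ) * x ^ i
        = ∑ p ∈ S, (walkCount S ((i : ℤ) - p.1) ((j : ℤ) - p.2) n : ℂ) * x ^ i := by
      intro i _
      rw [walkCount_succ S i j (Int.ofNat_nonneg i) (Int.ofNat_nonneg j) n,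
        Nat.cast_sum, Finset.sum_mul]
    rw [Finset.sum_congr rfl hq, Finset.sum_comm]
    rw [Finset.sum_mul, Finset.mul_sum]
    apply Finset.sum_congr rfl
    intro p _
    have h2 : (∑ i ∈ Finset.range (n+2),
          (walkCount S ((i : ℤ) - p.1) ((j : ℤ) - p.2) n : ℂ) * x ^ (i+1))
        = x * ∑ i ∈ Finset.range (n+2),
          (walkCount S ((i : ℤ) - p.1) ((j : ℤ) - p.2) n : ℂ) * x ^ i := by
      rw [Finset.mul_sum]
      exact Finset.sum_congr rfl fun i _ => by ring
    rw [h2]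
    ring
  rw [e1]
  have e2 : ∀ p ∈ S, ∑ j ∈ Finset.range (n+2),
        (∑ i ∈ Finset.range (n+2),
          (walkCount S ((i:ℤ)-p.1) ((j:ℤ)-p.2) n : ℂ) * x^(i+1)) * y^(j+1)
      = x ^ (p.1+1) * y ^ (p.2+1) * polyA S x y n
        - (if p.2 = -1 then x ^ (p.1+1) * polyB S x n else 0)
        - (if p.1 = -1 then y ^ (p.2+1) * polyR S y n else 0)
        + (if p = ((-1,-1) : ℤ×ℤ) then (walkCount S 0 0 n : ℂ) else 0) := by
    intro p hp
    obtain ⟨ha, hb⟩ := step_bound hS p hp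
    have hi : ∀ j ∈ Finset.range (n+2),
        (∑ i ∈ Finset.range (n+2),
          (walkCount S ((i:ℤ)-p.1) ((j:ℤ)-p.2) n : ℂ) * x^(i+1)) * y^(j+1)
        = (x ^ (p.1+1) * G ((j:ℤ)-p.2) - (if p.1 = -1 then H ((j:ℤ)-p.2) else 0)) * y^(j+1) := by
      intro j _
      congr 1
      exact shift1 n (fun m => (walkCount S m ((j:ℤ)-p.2) n : ℂ))
        (fun m hm => by
          show ((walkCount S m ((j:ℤ)-p.2) n : ℕ) : ℂ) = 0
          rw [walkCount_eq_zero_of_neg S _ _ _ (Or.inl hm), Nat.cast_zero])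
        (fun m hm => by
          show ((walkCount S m ((j:ℤ)-p.2) n : ℕ) : ℂ) = 0
          rw [walkCount_eq_zero_of_gt hS _ _ _ (Or.inl hm), Nat.cast_zero])
        p.1 ha x
    rw [Finset.sum_congr rfl hi]
    have hsplit : ∑ j ∈ Finset.range (n+2),
        (x ^ (p.1+1) * G ((j:ℤ)-p.2) - (if p.1 = -1 then H ((j:ℤ)-p.2) else 0)) * y^(j+1)
        = x ^ (p.1+1) * (∑ j ∈ Finset.range (n+2), G ((j:ℤ)-p.2) * y^(j+1))
          - (if p.1 = -1 then ∑ j ∈ Finset.range (n+2), H ((j:ℤ)-p.2) * y^(j+1) else 0) := by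
      rw [Finset.mul_sum]
      by_cases h1 : p.1 = -1
      · simp only [if_pos h1]
        rw [← Finset.sum_sub_distrib]
        exact Finset.sum_congr rfl fun j _ => by ring
      · simp only [if_neg h1]
        rw [sub_zero]
        exact Finset.sum_congr rfl fun j _ => by ring
    rw [hsplit, shift1 n G hGneg hGtop p.2 hb y, shift1 n H hHneg hHtop p.2 hb y]
    have hpe : (p = ((-1,-1) : ℤ×ℤ)) ↔ (p.1 = -1 ∧ p.2 = -1) := by
      rw [Prod.ext_iff]
    have hA : (∑ j ∈ Finset.range (n+1), G (j:ℤ) * y^j) = polyA S x y n := rfl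
    have hB : G 0 = polyB S x n := rfl
    have hR : (∑ j ∈ Finset.range (n+1), H (j:ℤ) * y^j) = polyR S y n := rfl
    have hD : H 0 = (walkCount S 0 0 n : ℂ) := rfl
    rw [hA, hB, hR, hD]
    by_cases h1 : p.1 = -1 <;> by_cases h2 : p.2 = -1 <;>
      simp only [h1, h2, hpe, if_true, if_false, and_true, and_false, true_and, false_and,
        reduceIte, iff_true, iff_false] <;> ring
  rw [Finset.sum_congr rfl e2]
  rw [Finset.sum_add_distrib, Finset.sum_sub_distrib, Finset.sum_sub_distrib]
  congr 1
  · congr 1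
    · congr 1
      · rw [Finset.sum_mul]
      · rw [← Finset.sum_filter, Finset.sum_mul]
    · rw [← Finset.sum_filter, Finset.sum_mul]
  · rw [Finset.sum_ite_eq' S ((-1,-1) : ℤ × ℤ) (fun _ => (walkCount S 0 0 n : ℂ))]

lemma summable_geo_aux {r : ℝ} (h0 : 0 ≤ r) (h1 : r < 1) :
    Summable (fun n : ℕ => ((n : ℝ) + 1)^2 * r^n) := by
  have hn : ‖r‖ < 1 := by rwa [Real.norm_eq_abs, abs_of_nonneg h0]
  have h2 := summable_pow_mul_geometric_of_norm_lt_one 2 hn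
  have h1' := summable_pow_mul_geometric_of_norm_lt_one 1 hn
  have h0' := summable_geometric_of_lt_one h0 h1
  exact (h2.add ((h1'.mul_left 2).add h0')).congr (fun n => by ring)

lemma polyA_norm_le {S : Finset (ℤ × ℤ)} {x y : ℂ}
    (hx : ‖x‖ ≤ 1) (hy : ‖y‖ ≤ 1) (n : ℕ) :
    ‖polyA S x y n‖ ≤ ((n : ℝ) + 1)^2 * (S.card : ℝ)^n := by
  have hterm : ∀ i j : ℕ, ‖(walkCount S i j n : ℂ) * x ^ i‖ ≤ (S.card : ℝ)^n := by
    intro i j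
    rw [norm_mul, Complex.norm_natCast, norm_pow]
    calc (walkCount S i j n : ℝ) * ‖x‖ ^ i
        ≤ (walkCount S i j n : ℝ) * 1 := by
          apply mul_le_mul_of_nonneg_left _ (by positivity)
          exact pow_le_one₀ (norm_nonneg x) hx
      _ ≤ (S.card : ℝ)^n := by
          rw [mul_one, ← Nat.cast_pow, Nat.cast_le]
          exact walkCount_le S i j n
  calc ‖polyA S x y n‖
      ≤ ∑ j ∈ Finset.range (n+1), ‖(∑ i ∈ Finset.range (n+1),
          (walkCount S i j n : ℂ) * x ^ i) * y ^ j‖ := norm_sum_le _ _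
    _ ≤ ∑ j ∈ Finset.range (n+1), ((n : ℝ) + 1) * (S.card : ℝ)^n := by
        apply Finset.sum_le_sum
        intro j _
        rw [norm_mul]
        calc ‖∑ i ∈ Finset.range (n+1), (walkCount S i j n : ℂ) * x ^ i‖ * ‖y ^ j‖
            ≤ ‖∑ i ∈ Finset.range (n+1), (walkCount S i j n : ℂ) * x ^ i‖ * 1 := by
              apply mul_le_mul_of_nonneg_left _ (norm_nonneg _)
              rw [norm_pow]
              exact pow_le_one₀ (norm_nonneg y) hy
          _ ≤ ((n : ℝ) + 1) * (S.card : ℝ)^n := by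
              rw [mul_one]
              calc ‖∑ i ∈ Finset.range (n+1), (walkCount S i j n : ℂ) * x ^ i‖
                  ≤ ∑ i ∈ Finset.range (n+1), ‖(walkCount S i j n : ℂ) * x ^ i‖ :=
                    norm_sum_le _ _
                _ ≤ ∑ _i ∈ Finset.range (n+1), (S.card : ℝ)^n :=
                    Finset.sum_le_sum (fun i _ => hterm i j)
                _ = ((n : ℝ) + 1) * (S.card : ℝ)^n := by
                    rw [Finset.sum_const, Finset.card_range, nsmul_eq_mul]
                    push_cast; ring
    _ = ((n : ℝ) + 1)^2 * (S.card : ℝ)^n := by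
        rw [Finset.sum_const, Finset.card_range, nsmul_eq_mul]
        push_cast; ring

lemma r_lt_one {S : Finset (ℤ × ℤ)} (hk : 1 ≤ S.card) {z : ℂ}
    (hz : ‖z‖ < 1 / (S.card : ℝ)) :
    (S.card : ℝ) * ‖z‖ < 1 := by
  have hkpos : (0 : ℝ) < (S.card : ℝ) := by
    have : 0 < S.card := hk
    exact_mod_cast this
  calc (S.card : ℝ) * ‖z‖ < (S.card : ℝ) * (1 / (S.card : ℝ)) :=
        mul_lt_mul_of_pos_left hz hkpos
    _ = 1 := by field_simp

lemma summable_polyA {S : Finset (ℤ × ℤ)} (hk : 1 ≤ S.card) {x y z : ℂ}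
    (hx : ‖x‖ ≤ 1) (hy : ‖y‖ ≤ 1)
    (hz : ‖z‖ < 1 / (S.card : ℝ)) :
    Summable (fun n : ℕ => polyA S x y n * z ^ n) := by
  have hr0 : (0:ℝ) ≤ (S.card : ℝ) * ‖z‖ := by positivity
  apply Summable.of_norm_bounded
    (summable_geo_aux hr0 (r_lt_one hk hz))
  intro n
  rw [norm_mul, norm_pow, mul_pow, ← mul_assoc]
  exact mul_le_mul_of_nonneg_right (polyA_norm_le hx hy n) (by positivity)

def rotEquiv : (ℕ × ℕ × ℕ) ≃ (ℕ × ℕ × ℕ) where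
  toFun q := (q.2.1, q.2.2, q.1)
  invFun p := (p.2.2, p.1, p.2.1)
  left_inv q := rfl
  right_inv p := rfl

lemma summable_F {S : Finset (ℤ × ℤ)}
    (hS : S ⊆ ({-1, 0, 1} ×ˢ {-1, 0, 1} : Finset (ℤ × ℤ)) \ {((0 : ℤ), (0 : ℤ))})
    (hk : 1 ≤ S.card) {x y z : ℂ}
    (hx : ‖x‖ ≤ 1) (hy : ‖y‖ ≤ 1)
    (hz : ‖z‖ < 1 / (S.card : ℝ)) :
    Summable (fun p : ℕ × ℕ × ℕ =>
      (walkCount S p.1 p.2.1 p.2.2 : ℂ) * x ^ p.1 * y ^ p.2.1 * z ^ p.2.2) := by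
  classical
  set r : ℝ := (S.card : ℝ) * ‖z‖ with hrdef
  have hr0 : (0:ℝ) ≤ r := by positivity
  have hr1 : r < 1 := r_lt_one hk hz
  -- the dominating function, grouped with n first
  set G : ℕ × ℕ × ℕ → ℝ :=
    fun q => if q.2.1 ≤ q.1 ∧ q.2.2 ≤ q.1 then r ^ q.1 else 0 with hGdef
  have hGnonneg : ∀ q, 0 ≤ G q := by
    intro q
    simp only [hGdef]
    split <;> positivity
  have hGvanish : ∀ n : ℕ, ∀ p : ℕ × ℕ,
      p ∉ Finset.range (n+1) ×ˢ Finset.range (n+1) → G (n, p) = 0 := by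
    intro n p hp
    simp only [hGdef]
    rw [if_neg]
    intro ⟨h1, h2⟩
    apply hp
    rw [Finset.mem_product, Finset.mem_range, Finset.mem_range]
    omega
  have hGtsum : ∀ n : ℕ, (∑' p : ℕ × ℕ, G (n, p)) = ((n:ℝ)+1)^2 * r^n := by
    intro n
    rw [tsum_eq_sum (hGvanish n)]
    have : ∀ p ∈ Finset.range (n+1) ×ˢ Finset.range (n+1), G (n, p) = r^n := by
      intro p hp
      rw [Finset.mem_product, Finset.mem_range, Finset.mem_range] at hp
      simp only [hGdef]
      rw [if_pos]
      exact ⟨by omega, by omega⟩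
    rw [Finset.sum_congr rfl this, Finset.sum_const, Finset.card_product,
      Finset.card_range, nsmul_eq_mul]
    push_cast; ring
  have hGsummable : Summable G := by
    apply (summable_prod_of_nonneg (fun q => hGnonneg q)).2
    constructor
    · intro n
      exact summable_of_ne_finset_zero (hGvanish n)
    · exact (summable_geo_aux hr0 hr1).congr (fun n => (hGtsum n).symm)
  have hGsummable' : Summable (fun p : ℕ × ℕ × ℕ => G (p.2.2, p.1, p.2.1)) := by
    have := rotEquiv.symm.summable_iff (f := G)
    exact this.mpr hGsummable
  apply Summable.of_norm_bounded hGsummable'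
  intro p
  by_cases h : p.1 ≤ p.2.2 ∧ p.2.1 ≤ p.2.2
  · have hGp : G (p.2.2, p.1, p.2.1) = r ^ p.2.2 := by
      simp only [hGdef]
      rw [if_pos h]
    rw [hGp]
    rw [norm_mul, norm_mul, norm_mul, Complex.norm_natCast, norm_pow, norm_pow, norm_pow,
      hrdef, mul_pow]
    have b1 : (walkCount S p.1 p.2.1 p.2.2 : ℝ) ≤ (S.card : ℝ) ^ p.2.2 := by
      rw [← Nat.cast_pow, Nat.cast_le]
      exact walkCount_le S _ _ _
    have b2 : ‖x‖ ^ p.1 ≤ 1 := pow_le_one₀ (norm_nonneg x) hx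
    have b3 : ‖y‖ ^ p.2.1 ≤ 1 := pow_le_one₀ (norm_nonneg y) hy
    calc (walkCount S p.1 p.2.1 p.2.2 : ℝ) * ‖x‖ ^ p.1 * ‖y‖ ^ p.2.1
          * ‖z‖ ^ p.2.2
        ≤ (S.card : ℝ) ^ p.2.2 * 1 * 1 * ‖z‖ ^ p.2.2 := by
          apply mul_le_mul_of_nonneg_right _ (by positivity)
          apply mul_le_mul (mul_le_mul b1 b2 (by positivity) (by positivity)) b3
            (by positivity) (by positivity)
      _ = (S.card : ℝ) ^ p.2.2 * ‖z‖ ^ p.2.2 := by ring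
  · have hq : walkCount S p.1 p.2.1 p.2.2 = 0 := by
      apply walkCount_eq_zero_of_gt hS
      push_neg at h
      rcases Nat.lt_or_ge p.2.2 p.1 with h1 | h1
      · left; exact_mod_cast h1
      · right; exact_mod_cast h h1
    rw [hq]
    simp only [Nat.cast_zero, zero_mul, norm_zero]
    exact hGnonneg _

lemma genF_eq_tsum_polyA {S : Finset (ℤ × ℤ)}
    (hS : S ⊆ ({-1, 0, 1} ×ˢ {-1, 0, 1} : Finset (ℤ × ℤ)) \ {((0 : ℤ), (0 : ℤ))})
    (hk : 1 ≤ S.card) {x y z : ℂ}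
    (hx : ‖x‖ ≤ 1) (hy : ‖y‖ ≤ 1)
    (hz : ‖z‖ < 1 / (S.card : ℝ)) :
    genF S x y z = ∑' n : ℕ, polyA S x y n * z ^ n := by
  classical
  have hF := summable_F hS hk hx hy hz
  unfold genF
  rw [← Equiv.tsum_eq rotEquiv (fun p : ℕ × ℕ × ℕ =>
    (walkCount S p.1 p.2.1 p.2.2 : ℂ) * x ^ p.1 * y ^ p.2.1 * z ^ p.2.2)]
  have hF2 : Summable (fun q : ℕ × ℕ × ℕ =>
      (walkCount S q.2.1 q.2.2 q.1 : ℂ) * x ^ q.2.1 * y ^ q.2.2 * z ^ q.1) := by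
    have := rotEquiv.summable_iff
      (f := fun p : ℕ × ℕ × ℕ =>
        (walkCount S p.1 p.2.1 p.2.2 : ℂ) * x ^ p.1 * y ^ p.2.1 * z ^ p.2.2)
    exact this.mpr hF
  have hvanish : ∀ n : ℕ, ∀ p : ℕ × ℕ, p ∉ Finset.range (n+1) ×ˢ Finset.range (n+1) →
      (walkCount S p.1 p.2 n : ℂ) * x ^ p.1 * y ^ p.2 * z ^ n = 0 := by
    intro n p hp
    rw [Finset.mem_product, Finset.mem_range, Finset.mem_range] at hp
    push_neg at hp
    have hq : walkCount S p.1 p.2 n = 0 := by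
      apply walkCount_eq_zero_of_gt hS
      rcases Nat.lt_or_ge p.1 (n+1) with h1 | h1
      · right
        have := hp h1
        exact_mod_cast this
      · left
        exact_mod_cast h1
    rw [hq]
    simp
  have hstep : (∑' q : ℕ × ℕ × ℕ,
      (walkCount S q.2.1 q.2.2 q.1 : ℂ) * x ^ q.2.1 * y ^ q.2.2 * z ^ q.1)
      = ∑' n : ℕ, ∑' p : ℕ × ℕ, (walkCount S p.1 p.2 n : ℂ) * x ^ p.1 * y ^ p.2 * z ^ n :=
    Summable.tsum_prod' hF2 (fun n => summable_of_ne_finset_zero (hvanish n))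
  rw [show (∑' q : ℕ × ℕ × ℕ, (fun p : ℕ × ℕ × ℕ =>
      (walkCount S p.1 p.2.1 p.2.2 : ℂ) * x ^ p.1 * y ^ p.2.1 * z ^ p.2.2) (rotEquiv q))
      = ∑' q : ℕ × ℕ × ℕ,
        (walkCount S q.2.1 q.2.2 q.1 : ℂ) * x ^ q.2.1 * y ^ q.2.2 * z ^ q.1 from rfl,
    hstep]
  apply tsum_congr
  intro n
  rw [tsum_eq_sum (hvanish n), Finset.sum_product]
  unfold polyA
  rw [Finset.sum_mul]
  have hj : ∀ j ∈ Finset.range (n+1),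
      ((∑ i ∈ Finset.range (n+1), (walkCount S i j n : ℂ) * x ^ i) * y ^ j) * z ^ n
      = ∑ i ∈ Finset.range (n+1), (walkCount S i j n : ℂ) * x ^ i * y ^ j * z ^ n := by
    intro j _
    rw [Finset.sum_mul, Finset.sum_mul]
  rw [Finset.sum_congr rfl hj, Finset.sum_comm]

lemma polyA_x_zero (S : Finset (ℤ × ℤ)) (x : ℂ) (n : ℕ) :
    polyA S x 0 n = polyB S x n := by
  unfold polyA polyB
  rw [Finset.sum_eq_single_of_mem 0 (Finset.mem_range.mpr (by omega))]
  · rw [pow_zero, mul_one]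
    norm_num
  · intro j _ hj
    rw [zero_pow hj, mul_zero]

lemma polyA_zero_y (S : Finset (ℤ × ℤ)) (y : ℂ) (n : ℕ) :
    polyA S 0 y n = polyR S y n := by
  unfold polyA polyR
  apply Finset.sum_congr rfl
  intro j _
  congr 1
  rw [Finset.sum_eq_single_of_mem 0 (Finset.mem_range.mpr (by omega))]
  · rw [pow_zero, mul_one]
    norm_num
  · intro i _ hi
    rw [zero_pow hi, mul_zero]

lemma polyA_zero_zero (S : Finset (ℤ × ℤ)) (n : ℕ) :
    polyA S 0 0 n = (walkCount S 0 0 n : ℂ) := by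
  rw [polyA_zero_y]
  unfold polyR
  rw [Finset.sum_eq_single_of_mem 0 (Finset.mem_range.mpr (by omega))]
  · rw [pow_zero, mul_one]
    norm_num
  · intro j _ hj
    rw [zero_pow hj, mul_zero]

/-- Expression of `Q(0,0;z)` when `(−1,−1) ∈ S`, by evaluating the functional equation
at a zero of the kernel. -/
theorem Q00_of_SW_mem (S : Finset (ℤ × ℤ))
    (hS : S ⊆ ({-1, 0, 1} ×ˢ {-1, 0, 1} : Finset (ℤ × ℤ)) \ {((0 : ℤ), (0 : ℤ))})
    (hk : 1 ≤ S.card)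
    (hSW : ((-1, -1) : ℤ × ℤ) ∈ S)
    (x₀ y₀ z : ℂ) (hx : ‖x₀‖ ≤ 1) (hy : ‖y₀‖ ≤ 1)
    (hz0 : 0 < ‖z‖) (hz : ‖z‖ < 1 / (S.card : ℝ))
    (hker : kernel S x₀ y₀ z = 0) :
    genF S 0 0 z =
      x₀ * y₀ / z
        - (cpoly S x₀ z * genF S x₀ 0 z - z * genF S 0 0 z) / z
        - (ctpoly S y₀ z * genF S 0 y₀ z - z * genF S 0 0 z) / z := by
  classical
  have hz' : z ≠ 0 := by
    intro h
    rw [h] at hz0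
    simp at hz0
  have habs0 : ‖(0:ℂ)‖ ≤ 1 := by simp
  have hQxy := genF_eq_tsum_polyA hS hk hx hy hz
  have hQx0 := genF_eq_tsum_polyA hS hk hx habs0 hz
  have hQ0y := genF_eq_tsum_polyA hS hk habs0 hy hz
  have hQ00 := genF_eq_tsum_polyA hS hk habs0 habs0 hz
  have hsum_xy := summable_polyA hk hx hy hz
  have hsum_x0 := summable_polyA hk hx habs0 hz
  have hsum_0y := summable_polyA hk habs0 hy hz
  have hsum_00 := summable_polyA hk habs0 habs0 hz
  set T : ℂ := ∑ p ∈ S, x₀ ^ (p.1 + 1) * y₀ ^ (p.2 + 1) with hT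
  set c : ℂ := ∑ p ∈ S.filter (fun p => p.2 = -1), x₀ ^ (p.1 + 1) with hc
  set ct : ℂ := ∑ p ∈ S.filter (fun p => p.1 = -1), y₀ ^ (p.2 + 1) with hct
  have key : ∀ n : ℕ, x₀ * y₀ * (polyA S x₀ y₀ (n+1) * z ^ (n+1))
      = (T * z) * (polyA S x₀ y₀ n * z ^ n) - (c * z) * (polyA S x₀ 0 n * z ^ n)
        - (ct * z) * (polyA S 0 y₀ n * z ^ n) + z * (polyA S 0 0 n * z ^ n) := by
    intro n
    have hid := step_identity hS x₀ y₀ n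
    rw [if_pos hSW, ← polyA_x_zero, ← polyA_zero_y, ← polyA_zero_zero] at hid
    linear_combination z ^ (n+1) * hid
  have hA0 : polyA S x₀ y₀ 0 * z ^ 0 = 1 := by
    unfold polyA
    simp [walkCount_zero_zero]
  have hshift : ∑' n : ℕ, (polyA S x₀ y₀ (n+1) * z ^ (n+1)) = genF S x₀ y₀ z - 1 := by
    rw [hQxy, Summable.tsum_eq_zero_add hsum_xy, hA0]
    ring
  have hmain : x₀ * y₀ * (genF S x₀ y₀ z - 1)
      = (T * z) * genF S x₀ y₀ z - (c * z) * genF S x₀ 0 z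
        - (ct * z) * genF S 0 y₀ z + z * genF S 0 0 z := by
    have s1 := hsum_xy.mul_left (T * z)
    have s2 := hsum_x0.mul_left (c * z)
    have s3 := hsum_0y.mul_left (ct * z)
    have s4 := hsum_00.mul_left z
    calc x₀ * y₀ * (genF S x₀ y₀ z - 1)
        = ∑' n : ℕ, x₀ * y₀ * (polyA S x₀ y₀ (n+1) * z ^ (n+1)) := by
          rw [tsum_mul_left, hshift]
      _ = ∑' n : ℕ, ((T * z) * (polyA S x₀ y₀ n * z ^ n)
            - (c * z) * (polyA S x₀ 0 n * z ^ n)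
            - (ct * z) * (polyA S 0 y₀ n * z ^ n) + z * (polyA S 0 0 n * z ^ n)) :=
          tsum_congr key
      _ = ((∑' n : ℕ, (T * z) * (polyA S x₀ y₀ n * z ^ n))
            - (∑' n : ℕ, (c * z) * (polyA S x₀ 0 n * z ^ n))
            - (∑' n : ℕ, (ct * z) * (polyA S 0 y₀ n * z ^ n)))
            + (∑' n : ℕ, z * (polyA S 0 0 n * z ^ n)) := by
          rw [Summable.tsum_add ((s1.sub s2).sub s3) s4,
            Summable.tsum_sub (s1.sub s2) s3, Summable.tsum_sub s1 s2]
      _ = (T * z) * genF S x₀ y₀ z - (c * z) * genF S x₀ 0 z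
            - (ct * z) * genF S 0 y₀ z + z * genF S 0 0 z := by
          rw [tsum_mul_left, tsum_mul_left, tsum_mul_left, tsum_mul_left,
            hQxy, hQx0, hQ0y, hQ00]
  have hT0 : z * T = x₀ * y₀ := by
    unfold kernel at hker
    linear_combination hker
  have hfinal : z * genF S 0 0 z
      = z * c * genF S x₀ 0 z + z * ct * genF S 0 y₀ z - x₀ * y₀ := by
    linear_combination (-1 : ℂ) * hmain - genF S x₀ y₀ z * hT0
  have hcp : cpoly S x₀ z = z * c := rfl
  have hctp : ctpoly S y₀ z = z * ct := rfl
  rw [hcp, hctp]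
  field_simp
  linear_combination (-1 : ℂ) * hfinal
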